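/- Apply the dqd transform (shift 0) to a positive upper bidiagonal matrix B with intermediate values d_1,…,d_n, producing bidiagonal hat{B} with B·Bᵀ = hat{B}ᵀ·hat{B}. Then σ_min(hat{B})² ≤ min_k d_k, where σ_min denotes the smallest singular value. -/

import Mathlib

open Matrix

/-- The `n×n` upper bidiagonal matrix with diagonal `a` and superdiagonal `b`. -/
def upperBidiagonal (n : ℕ) (a b : ℕ → ℝ) : Matrix (Fin n) (Fin n) ℝ :=
  Matrix.of fun i j => if (j : ℕ) = (i : ℕ) then a i
    else if (j : ℕ) = (i : ℕ) + 1 then b i else 0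

/-- Solution of `B u = e_k` for upper bidiagonal `B`. -/
noncomputable def dqdU (a b : ℕ → ℝ) (k : ℕ) : ℕ → ℝ := fun j =>
  if j ≤ k then (-1 : ℝ)^(k-j) * ((∏ i ∈ Finset.Ico j k, b i) / (∏ i ∈ Finset.Icc j k, a i))
  else 0

lemma dqdU_self (a b : ℕ → ℝ) (k : ℕ) : dqdU a b k k = 1 / a k := by
  simp [dqdU, Finset.Icc_self]

lemma dqdU_gt (a b : ℕ → ℝ) (k j : ℕ) (h : k < j) : dqdU a b k j = 0 := by
  simp [dqdU, Nat.not_le.mpr h]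

lemma dqdU_rec (a b : ℕ → ℝ) (k j : ℕ) (hj : j < k) (haj : a j ≠ 0) :
    a j * dqdU a b k j + b j * dqdU a b k (j+1) = 0 := by
  have h1 : j ≤ k := hj.le
  have h2 : j + 1 ≤ k := hj
  rw [dqdU, dqdU, if_pos h1, if_pos h2]
  have hpow : (-1 : ℝ)^(k-j) = (-1) * (-1 : ℝ)^(k-(j+1)) := by
    have : k - j = (k - (j+1)) + 1 := by omega
    rw [this, pow_succ]; ring
  have hIco : ∏ i ∈ Finset.Ico j k, b i = b j * ∏ i ∈ Finset.Ico (j+1) k, b i :=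
    Finset.prod_eq_prod_Ico_succ_bot hj b
  have hIcc : ∏ i ∈ Finset.Icc j k, a i = a j * ∏ i ∈ Finset.Icc (j+1) k, a i := by
    rw [← Finset.Ico_add_one_right_eq_Icc, ← Finset.Ico_add_one_right_eq_Icc]
    exact Finset.prod_eq_prod_Ico_succ_bot (by omega) a
  rw [hpow, hIco, hIcc]
  by_cases hQ : ∏ i ∈ Finset.Icc (j+1) k, a i = 0
  · rw [← Finset.Ico_add_one_right_eq_Icc] at hQ ⊢
    rw [hQ]
    simp
  · field_simp
    ring
lemma dqdU_succ (a b : ℕ → ℝ) (k j : ℕ) (hj : j ≤ k) :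
    dqdU a b (k+1) j = (-(b k) / a (k+1)) * dqdU a b k j := by
  rw [dqdU, dqdU, if_pos (by omega : j ≤ k + 1), if_pos hj]
  have hpow : (-1 : ℝ)^(k+1-j) = (-1) * (-1 : ℝ)^(k-j) := by
    have : k + 1 - j = (k - j) + 1 := by omega
    rw [this, pow_succ]; ring
  have hIco : ∏ i ∈ Finset.Ico j (k+1), b i = (∏ i ∈ Finset.Ico j k, b i) * b k :=
    Finset.prod_Ico_succ_top hj b
  have hIcc : ∏ i ∈ Finset.Icc j (k+1), a i = (∏ i ∈ Finset.Icc j k, a i) * a (k+1) := by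
    rw [← Finset.Ico_add_one_right_eq_Icc, ← Finset.Ico_add_one_right_eq_Icc]
    exact Finset.prod_Ico_succ_top (by omega) a
  rw [hpow, hIco, hIcc]
  rw [← div_mul_div_comm]
  ring

/-- Forward substitution solving `Bᵀ z = u` for upper bidiagonal `B`. -/
noncomputable def dqdZ (a b u : ℕ → ℝ) : ℕ → ℝ
  | 0 => u 0 / a 0
  | (i+1) => (u (i+1) - b i * dqdZ a b u i) / a (i+1)

lemma dqdZ_spec (a b u : ℕ → ℝ) (i : ℕ) (hai : a i ≠ 0) :
    a i * dqdZ a b u i + (if 0 < i then b (i-1) * dqdZ a b u (i-1) else 0) = u i := by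
  cases i with
  | zero => simp [dqdZ]; field_simp
  | succ m =>
    simp only [dqdZ, Nat.succ_sub_one, if_pos (Nat.succ_pos m)]
    field_simp
    ring

lemma dqd_d_pos_sum (n : ℕ) (a b d : ℕ → ℝ)
    (ha : ∀ k < n, 0 < a k) (hb : ∀ k, k + 1 < n → 0 < b k)
    (hd1 : d 0 = (a 0) ^ 2)
    (hdk : ∀ k, k + 1 < n → d (k + 1) = d k * (a (k + 1)) ^ 2 / (d k + (b k) ^ 2)) :
    ∀ k < n, 0 < d k ∧ ∑ j ∈ Finset.range (k+1), (dqdU a b k j)^2 = 1 / d k := by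
  intro k
  induction k with
  | zero =>
    intro h0
    have ha0 := ha 0 h0
    constructor
    · rw [hd1]; positivity
    · rw [Finset.sum_range_one, dqdU_self, hd1]
      rw [div_pow, one_pow]
  | succ m ih =>
    intro hm1
    obtain ⟨hdm, hsum⟩ := ih (by omega)
    have ham1 : 0 < a (m+1) := ha (m+1) hm1
    have hbm : (0:ℝ) ≤ (b m)^2 := sq_nonneg _
    have hden : 0 < d m + (b m)^2 := by linarith
    have hdrec := hdk m hm1
    have hdm1 : 0 < d (m+1) := by
      rw [hdrec]; positivity
    refine ⟨hdm1, ?_⟩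
    rw [Finset.sum_range_succ]
    have hstep : ∀ j ∈ Finset.range (m+1), (dqdU a b (m+1) j)^2
        = (b m / a (m+1))^2 * (dqdU a b m j)^2 := by
      intro j hj
      rw [Finset.mem_range] at hj
      rw [dqdU_succ a b m j (by omega)]
      rw [mul_pow, neg_div, neg_sq]
    rw [Finset.sum_congr rfl hstep, ← Finset.mul_sum, hsum, dqdU_self]
    rw [hdrec]
    have ham1' : a (m+1) ≠ 0 := ne_of_gt ham1
    have hdm' : d m ≠ 0 := ne_of_gt hdm
    have hden' : d m + (b m)^2 ≠ 0 := ne_of_gt hden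
    field_simp
    ring

lemma upperBidiagonal_mulVec (n : ℕ) (a b : ℕ → ℝ) (v : Fin n → ℝ) (i : Fin n) :
    (upperBidiagonal n a b *ᵥ v) i =
      a i * v i + (if h : (i:ℕ)+1 < n then b i * v ⟨(i:ℕ)+1, h⟩ else 0) := by
  classical
  rw [Matrix.mulVec, dotProduct]
  by_cases h : (i:ℕ)+1 < n
  · rw [dif_pos h]
    have key : ∀ j : Fin n, upperBidiagonal n a b i j * v j =
        (if j = i then a i * v i else 0) +
        (if j = (⟨(i:ℕ)+1, h⟩ : Fin n) then b i * v ⟨(i:ℕ)+1, h⟩ else 0) := by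
      intro j
      simp only [upperBidiagonal, Matrix.of_apply]
      rcases eq_or_ne j i with rfl | hji
      · have hne : j ≠ (⟨(j:ℕ)+1, h⟩ : Fin n) := by
          intro hc; have := congrArg Fin.val hc; simp at this
        simp [hne]
      · have h1 : (j:ℕ) ≠ (i:ℕ) := fun hc => hji (Fin.ext hc)
        rw [if_neg h1, if_neg hji]
        rcases eq_or_ne j (⟨(i:ℕ)+1, h⟩ : Fin n) with rfl | hj2
        · simp
        · have h2 : (j:ℕ) ≠ (i:ℕ)+1 := fun hc => hj2 (Fin.ext hc)
          rw [if_neg h2, if_neg hj2]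
          simp
    rw [Finset.sum_congr rfl (fun j _ => key j), Finset.sum_add_distrib,
      Finset.sum_ite_eq', Finset.sum_ite_eq']
    simp
  · rw [dif_neg h]
    have key : ∀ j : Fin n, upperBidiagonal n a b i j * v j =
        (if j = i then a i * v i else 0) := by
      intro j
      simp only [upperBidiagonal, Matrix.of_apply]
      rcases eq_or_ne j i with rfl | hji
      · simp
      · have h1 : (j:ℕ) ≠ (i:ℕ) := fun hc => hji (Fin.ext hc)
        have h2 : (j:ℕ) ≠ (i:ℕ)+1 := by have := j.isLt; omega
        rw [if_neg h1, if_neg h2, if_neg hji]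
        simp
    rw [Finset.sum_congr rfl (fun j _ => key j), Finset.sum_ite_eq']
    simp

lemma upperBidiagonal_transpose_mulVec (n : ℕ) (a b : ℕ → ℝ) (v : Fin n → ℝ) (i : Fin n) :
    ((upperBidiagonal n a b)ᵀ *ᵥ v) i =
      a i * v i + (if h : 0 < (i:ℕ) then
        b ((i:ℕ)-1) * v ⟨(i:ℕ)-1, by omega⟩ else 0) := by
  classical
  rw [Matrix.mulVec, dotProduct]
  by_cases h : 0 < (i:ℕ)
  · rw [dif_pos h]
    have hlt : (i:ℕ) - 1 < n := by have := i.isLt; omega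
    have key : ∀ j : Fin n, (upperBidiagonal n a b)ᵀ i j * v j =
        (if j = i then a i * v i else 0) +
        (if j = (⟨(i:ℕ)-1, hlt⟩ : Fin n) then b ((i:ℕ)-1) * v ⟨(i:ℕ)-1, hlt⟩ else 0) := by
      intro j
      simp only [upperBidiagonal, Matrix.transpose_apply, Matrix.of_apply]
      rcases eq_or_ne j i with rfl | hji
      · have hne : j ≠ (⟨(j:ℕ)-1, hlt⟩ : Fin n) := by
          intro hc; have := congrArg Fin.val hc; simp at this; omega
        have hne2 : ((j:ℕ)) ≠ (j:ℕ) + 1 := by omega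
        simp [hne, hne2]
      · have h1 : (i:ℕ) ≠ (j:ℕ) := fun hc => hji (Fin.ext hc.symm)
        rw [if_neg h1, if_neg hji]
        rcases eq_or_ne j (⟨(i:ℕ)-1, hlt⟩ : Fin n) with rfl | hj2
        · have h2 : (i:ℕ) = ((⟨(i:ℕ)-1, hlt⟩ : Fin n) :ℕ) + 1 := by simp; omega
          rw [if_pos h2, if_pos rfl]
          simp
        · have h2 : (i:ℕ) ≠ (j:ℕ)+1 := by
            intro hc
            exact hj2 (Fin.ext (show (j:ℕ) = (i:ℕ)-1 by omega))
          rw [if_neg h2, if_neg hj2]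
          simp
    rw [Finset.sum_congr rfl (fun j _ => key j), Finset.sum_add_distrib,
      Finset.sum_ite_eq', Finset.sum_ite_eq']
    simp
  · rw [dif_neg h]
    have hi0 : (i:ℕ) = 0 := by omega
    have key : ∀ j : Fin n, (upperBidiagonal n a b)ᵀ i j * v j =
        (if j = i then a i * v i else 0) := by
      intro j
      simp only [upperBidiagonal, Matrix.transpose_apply, Matrix.of_apply]
      rcases eq_or_ne j i with rfl | hji
      · simp
      · have h1 : (i:ℕ) ≠ (j:ℕ) := fun hc => hji (Fin.ext hc.symm)
        have h2 : (i:ℕ) ≠ (j:ℕ)+1 := by omega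
        rw [if_neg h1, if_neg h2, if_neg hji]
        simp
    rw [Finset.sum_congr rfl (fun j _ => key j), Finset.sum_ite_eq']
    simp

lemma rayleigh_le (n : ℕ) (M : Matrix (Fin n) (Fin n) ℝ) (hM : M.IsHermitian)
    (x : Fin n → ℝ) :
    (⨅ i, hM.eigenvalues i) * (x ⬝ᵥ x) ≤ x ⬝ᵥ (M *ᵥ x) := by
  classical
  set U : Matrix (Fin n) (Fin n) ℝ := (hM.eigenvectorUnitary : Matrix (Fin n) (Fin n) ℝ) with hU
  have hUU : U * star U = 1 := Matrix.mem_unitaryGroup_iff.mp hM.eigenvectorUnitary.2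
  have hxU : x ᵥ* U = star U *ᵥ x := by
    rw [← Matrix.mulVec_transpose]; congr 1
  have hD : (RCLike.ofReal ∘ hM.eigenvalues : Fin n → ℝ) = hM.eigenvalues := by
    funext i; simp
  have hxx : x ⬝ᵥ x = (star U *ᵥ x) ⬝ᵥ (star U *ᵥ x) := by
    calc x ⬝ᵥ x = x ⬝ᵥ ((U * star U) *ᵥ x) := by rw [hUU, Matrix.one_mulVec]
    _ = x ⬝ᵥ (U *ᵥ (star U *ᵥ x)) := by rw [← Matrix.mulVec_mulVec]
    _ = (x ᵥ* U) ⬝ᵥ (star U *ᵥ x) := by rw [Matrix.dotProduct_mulVec]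
    _ = _ := by rw [hxU]
  have hMx : x ⬝ᵥ (M *ᵥ x) = ∑ i, hM.eigenvalues i * (star U *ᵥ x) i ^ 2 := by
    calc x ⬝ᵥ (M *ᵥ x)
        = x ⬝ᵥ ((U * diagonal (RCLike.ofReal ∘ hM.eigenvalues) * star U) *ᵥ x) := by
          conv_lhs => rw [hM.spectral_theorem, Unitary.conjStarAlgAut_apply]
      _ = x ⬝ᵥ (U *ᵥ (diagonal (RCLike.ofReal ∘ hM.eigenvalues) *ᵥ (star U *ᵥ x))) := by
          rw [← Matrix.mulVec_mulVec, ← Matrix.mulVec_mulVec]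
      _ = (x ᵥ* U) ⬝ᵥ (diagonal (RCLike.ofReal ∘ hM.eigenvalues) *ᵥ (star U *ᵥ x)) := by
          rw [Matrix.dotProduct_mulVec]
      _ = (star U *ᵥ x) ⬝ᵥ (diagonal hM.eigenvalues *ᵥ (star U *ᵥ x)) := by rw [hxU, hD]
      _ = ∑ i, hM.eigenvalues i * (star U *ᵥ x) i ^ 2 := by
          rw [dotProduct]
          refine Finset.sum_congr rfl fun i _ => ?_
          rw [Matrix.mulVec_diagonal]
          ring
  rw [hxx, hMx, dotProduct, Finset.mul_sum]
  apply Finset.sum_le_sum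
  intro i _
  have h1 : (⨅ j, hM.eigenvalues j) ≤ hM.eigenvalues i :=
    ciInf_le (Finite.bddBelow_range _) i
  nlinarith [sq_nonneg ((star U *ᵥ x) i)]

/-- After one dqd transform (`B*Bᵀ = B̂ᵀ*B̂`), the square of the smallest singular
value of `B̂` is at most every intermediate value `d_k`. -/
theorem dqd_smallest_singular_le_d (n : ℕ) (hn : 0 < n) (a b d : ℕ → ℝ)
    (Bhat : Matrix (Fin n) (Fin n) ℝ)
    (ha : ∀ k < n, 0 < a k) (hb : ∀ k, k + 1 < n → 0 < b k)
    (hd1 : d 0 = (a 0) ^ 2)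
    (hdk : ∀ k, k + 1 < n → d (k + 1) = d k * (a (k + 1)) ^ 2 / (d k + (b k) ^ 2))
    (hBhat : upperBidiagonal n a b * (upperBidiagonal n a b)ᵀ = Bhatᵀ * Bhat)
    (hM : (Bhatᵀ * Bhat).IsHermitian) :
    ∀ k < n, (⨅ i, hM.eigenvalues i) ≤ d k := by
  intro k hk
  classical
  obtain ⟨hdk0, hsum⟩ := dqd_d_pos_sum n a b d ha hb hd1 hdk k hk
  set u : ℕ → ℝ := dqdU a b k with hu
  set uv : Fin n → ℝ := fun j => u (j:ℕ) with huv
  set x : Fin n → ℝ := fun i => dqdZ a b u (i:ℕ) with hx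
  set k' : Fin n := ⟨k, hk⟩ with hk'
  have hkv : (k' : ℕ) = k := by rw [hk']
  have hBu : upperBidiagonal n a b *ᵥ uv = Pi.single k' 1 := by
    funext i
    rw [upperBidiagonal_mulVec]
    by_cases h1 : (i:ℕ)+1 < n
    · rw [dif_pos h1]
      simp only [huv, hu]
      rcases lt_trichotomy (i:ℕ) k with hik | hik | hik
      · rw [Pi.single_eq_of_ne (Fin.ne_of_val_ne (by rw [hkv]; omega))]
        exact dqdU_rec a b k i hik (ne_of_gt (ha i (by omega)))
      · have hik' : i = k' := Fin.ext (by rw [hkv]; exact hik)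
        rw [hik', hk', Pi.single_eq_same]
        show a k * dqdU a b k k + b k * dqdU a b k (k+1) = 1
        rw [dqdU_self, dqdU_gt a b k (k+1) (by omega)]
        field_simp [ne_of_gt (ha k hk)]
        ring
      · rw [dqdU_gt a b k i (by omega), dqdU_gt a b k _ (by omega),
          Pi.single_eq_of_ne (Fin.ne_of_val_ne (by rw [hkv]; omega))]
        ring
    · rw [dif_neg h1]
      simp only [huv, hu]
      rcases lt_trichotomy (i:ℕ) k with hik | hik | hik
      · exfalso; omega
      · have hik' : i = k' := Fin.ext (by rw [hkv]; exact hik)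
        rw [hik', hk', Pi.single_eq_same]
        show a k * dqdU a b k k + 0 = 1
        rw [dqdU_self]
        field_simp [ne_of_gt (ha k hk)]
        ring
      · rw [dqdU_gt a b k i (by omega),
          Pi.single_eq_of_ne (Fin.ne_of_val_ne (by rw [hkv]; omega))]
        ring
  have hBtx : (upperBidiagonal n a b)ᵀ *ᵥ x = uv := by
    funext i
    rw [upperBidiagonal_transpose_mulVec]
    show a i * dqdZ a b u (i:ℕ) +
      (if h : 0 < (i:ℕ) then b ((i:ℕ)-1) * dqdZ a b u ((i:ℕ)-1) else 0) = u (i:ℕ)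
    rw [dite_eq_ite]
    exact dqdZ_spec a b u i (ne_of_gt (ha i i.isLt))
  have hq : x ⬝ᵥ ((Bhatᵀ * Bhat) *ᵥ x) = uv ⬝ᵥ uv := by
    rw [← hBhat, ← Matrix.mulVec_mulVec, hBtx, Matrix.dotProduct_mulVec,
      ← Matrix.mulVec_transpose, hBtx]
  have hxk : x k' = uv ⬝ᵥ uv := by
    have h1 : x ⬝ᵥ (upperBidiagonal n a b *ᵥ uv) = uv ⬝ᵥ uv := by
      rw [Matrix.dotProduct_mulVec, ← Matrix.mulVec_transpose, hBtx]
    rw [hBu] at h1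
    simpa using h1
  have hS : uv ⬝ᵥ uv = 1 / d k := by
    rw [dotProduct]
    have e1 : ∑ j : Fin n, u (j:ℕ) * u (j:ℕ)
        = ∑ j ∈ Finset.range n, u j * u j := Fin.sum_univ_eq_sum_range (fun j => u j * u j) n
    have e2 : ∑ j ∈ Finset.range (k+1), u j * u j = ∑ j ∈ Finset.range n, u j * u j :=
      Finset.sum_subset (Finset.range_subset_range.mpr (by omega))
        (fun j _ hj => by
          rw [hu, dqdU_gt a b k j (by simp only [Finset.mem_range] at hj; omega)]; ring)
    rw [e1, ← e2, ← hsum]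
    exact Finset.sum_congr rfl fun j _ => (pow_two _).symm
  have hxx_ge : (1/d k)^2 ≤ x ⬝ᵥ x := by
    rw [dotProduct]
    have h2 := Finset.single_le_sum (f := fun i : Fin n => x i * x i)
      (fun i _ => mul_self_nonneg (x i)) (Finset.mem_univ k')
    calc (1/d k)^2 = x k' * x k' := by rw [hxk, hS, pow_two]
    _ ≤ _ := h2
  have hray := rayleigh_le n (Bhatᵀ * Bhat) hM x
  rw [hq, hS] at hray
  by_cases hneg : (⨅ i, hM.eigenvalues i) ≤ 0
  · linarith
  · push_neg at hneg
    have h2 : (⨅ i, hM.eigenvalues i) * (1/d k)^2 ≤ (⨅ i, hM.eigenvalues i) * (x ⬝ᵥ x) :=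
      mul_le_mul_of_nonneg_left hxx_ge (le_of_lt hneg)
    have h3 : (⨅ i, hM.eigenvalues i) * (1/d k)^2 ≤ 1 / d k := le_trans h2 hray
    have hp : (0:ℝ) < d k ^ 2 := by positivity
    have h4 := mul_le_mul_of_nonneg_left h3 hp.le
    have e1 : d k ^2 * ((⨅ i, hM.eigenvalues i) * (1/d k)^2) = ⨅ i, hM.eigenvalues i := by
      field_simp
    have e2 : d k ^2 * (1/d k) = d k := by
      rw [pow_two]; field_simp
    rwa [e1, e2] at h4
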